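/- Let q be a power of an odd prime with q ≡ 1 (mod 3) and F = 𝔽_q. Let φ be an automorphism of the graph R and let r, w ∈ F. If φ([0,1,r]) = [0,1,w], then φ([0,0,r−1]) = [0,0,w−1]. -/

import Mathlib

/-- Vertices: points (left component) and lines (right component), each a triple over `F`. -/
abbrev Vtx (F : Type) := (F × F × F) ⊕ (F × F × F)

/-- Adjacency for the graph `Γ_F(p₁ℓ₁, g(p₁,p₂,ℓ₁))`: a point `(p₁,p₂,p₃)` and a line
`[ℓ₁,ℓ₂,ℓ₃]` are adjacent iff `p₂+ℓ₂ = p₁ℓ₁` and `p₃+ℓ₃ = g(p₁,p₂,ℓ₁)`. -/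
def gammaAdj (F : Type) [Field F] (g : F → F → F → F) : Vtx F → Vtx F → Prop
  | Sum.inl p, Sum.inr l => p.2.1 + l.2.1 = p.1 * l.1 ∧ p.2.2 + l.2.2 = g p.1 p.2.1 l.1
  | Sum.inr l, Sum.inl p => p.2.1 + l.2.1 = p.1 * l.1 ∧ p.2.2 + l.2.2 = g p.1 p.2.1 l.1
  | _, _ => False

/-- The bipartite graph `Γ_F(p₁ℓ₁, g(p₁,p₂,ℓ₁))`. -/
def Gamma (F : Type) [Field F] (g : F → F → F → F) : SimpleGraph (Vtx F) where
  Adj := gammaAdj F g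
  symm := by
    constructor
    intro v w h
    match v, w with
    | Sum.inl p, Sum.inr l => exact h
    | Sum.inr l, Sum.inl p => exact h
  loopless := by
    constructor
    intro v h
    match v with
    | Sum.inl p => exact h
    | Sum.inr l => exact h

/-- The graph `R = Γ_F(p₁ℓ₁, p₁p₂ℓ₁(p₁+p₂+p₁p₂))`. -/
def RGraph (F : Type) [Field F] : SimpleGraph (Vtx F) :=
  Gamma F (fun p1 p2 l1 => p1 * p2 * l1 * (p1 + p2 + p1 * p2))

set_option linter.unusedSectionVars false
set_option linter.unusedVariables false

namespace AutShiftAux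
variable {F : Type} [Field F] [Fintype F]

lemma adj_lp {l p : F × F × F} :
    (RGraph F).Adj (Sum.inr l) (Sum.inl p) ↔
      p.2.1 + l.2.1 = p.1 * l.1 ∧
      p.2.2 + l.2.2 = p.1 * p.2.1 * l.1 * (p.1 + p.2.1 + p.1 * p.2.1) := Iff.rfl

lemma adj_pl {p l : F × F × F} :
    (RGraph F).Adj (Sum.inl p) (Sum.inr l) ↔
      p.2.1 + l.2.1 = p.1 * l.1 ∧
      p.2.2 + l.2.2 = p.1 * p.2.1 * l.1 * (p.1 + p.2.1 + p.1 * p.2.1) := Iff.rfl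

lemma adj_ll {l l' : F × F × F} : ¬ (RGraph F).Adj (Sum.inr l) (Sum.inr l') := fun h => h
lemma adj_pp {p p' : F × F × F} : ¬ (RGraph F).Adj (Sum.inl p) (Sum.inl p') := fun h => h

def wit (A Q : Vtx F) : Set (Vtx F) :=
  {N | (RGraph F).Adj Q N ∧ ∃ X, (RGraph F).Adj N X ∧ (RGraph F).Adj X A}

def Phi (A B : Vtx F) : Prop :=
  (∀ X, ¬((RGraph F).Adj A X ∧ (RGraph F).Adj B X)) ∧
  ∃ Q, (RGraph F).Adj B Q ∧ ¬(RGraph F).Adj A Q ∧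
    (wit A Q).ncard = Fintype.card F - 1 ∧
    ∀ Q', (RGraph F).Adj B Q' → ¬(RGraph F).Adj A Q' → wit A Q' ≠ ∅ → Q' = Q

lemma adj_line_point (β γ b c d : F) :
    (RGraph F).Adj (Sum.inr (0, β, γ)) (Sum.inl (b, c, d)) ↔ c = -β ∧ d = -γ := by
  rw [adj_lp]
  constructor
  · rintro ⟨h1, h2⟩
    exact ⟨by linear_combination h1, by linear_combination h2⟩
  · rintro ⟨rfl, rfl⟩
    constructor <;> ring

/-- coefficients of the witness quadratic -/
def co2 (β b c : F) : F := b * (c * (b + c + b * c) - β ^ 2 + β * (1 - β) * b)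
def co1 (β γ b c d : F) : F := -(d + γ) + β ^ 2 * (c + β) - 2 * β * (1 - β) * b * (c + β)
def co0 (β b c : F) : F := β * (1 - β) * (c + β) ^ 2

lemma wit_eq (β γ b c d : F) (hQ : ¬(c = -β ∧ d = -γ)) :
    wit (Sum.inr (0, β, γ)) (Sum.inl (b, c, d)) =
      (fun x : F => (Sum.inr (x, b * x - c, b * c * x * (b + c + b * c) - d) : Vtx F)) ''
        {x : F | x ≠ 0 ∧ co2 β b c * x ^ 2 + co1 β γ b c d * x + co0 β b c = 0} := by
  ext N
  constructor
  · rintro ⟨hQN, X, hNX, hXA⟩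
    rcases N with n | ⟨n1, n2, n3⟩
    · exact hQN.elim
    rcases X with ⟨a, x2, x3⟩ | x
    · rcases adj_pl.mp hXA with ⟨h3, h4⟩
      rcases adj_pl.mp hQN with ⟨h1, h2⟩
      rcases adj_lp.mp hNX with ⟨h5, h6⟩
      simp only at h1 h2 h3 h4 h5 h6
      have hx2 : x2 = -β := by linear_combination h3
      have hx3 : x3 = -γ := by linear_combination h4
      subst hx2 hx3
      have hn1 : n1 ≠ 0 := by
        rintro rfl
        refine hQ ⟨?_, ?_⟩
        · linear_combination h1 - h5
        · linear_combination h2 - h6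
      have han : a * n1 = b * n1 - c - β := by linear_combination h1 - h5
      have h6' : n1 * (-γ + n3) =
          -β * (a * n1) * (a * n1 - β * n1 - β * (a * n1)) := by linear_combination n1 * h6
      rw [han] at h6'
      refine ⟨n1, ⟨hn1, ?_⟩, ?_⟩
      · simp only [Set.mem_setOf_eq, co2, co1, co0]
        linear_combination (-n1) * h2 + h6'
      · simp only
        have e2 : n2 = b * n1 - c := by linear_combination h1
        have e3 : n3 = b * c * n1 * (b + c + b * c) - d := by linear_combination h2
        rw [e2, e3]
    · exact (adj_ll hXA).elim
  · rintro ⟨x, ⟨hx, hquad⟩, rfl⟩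
    simp only [Set.mem_setOf_eq, co2, co1, co0] at hquad
    have ha : (b * x - c - β) / x * x = b * x - c - β := by field_simp
    refine ⟨adj_pl.mpr ⟨by ring, by ring⟩,
      Sum.inl ((b * x - c - β) / x, -β, -γ), adj_lp.mpr ⟨?_, ?_⟩, adj_pl.mpr ⟨by ring, by ring⟩⟩
    · simp only
      linear_combination -ha
    · simp only
      have G' : x * (-γ + (b * c * x * (b + c + b * c) - d)) =
          -β * (b * x - c - β) * ((b * x - c - β) - β * x - β * (b * x - c - β)) := by
        linear_combination hquad
      apply mul_left_cancel₀ hx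
      linear_combination G' + (β * (1 - β) * ((b * x - c - β) / x * x + (b * x - c - β)) - β ^ 2 * x) * ha
lemma ncard_ne_zero : ({x : F | x ≠ 0}).ncard = Fintype.card F - 1 := by
  have h : {x : F | x ≠ 0} = Set.univ \ {0} := by ext x; simp
  rw [h, Set.ncard_diff_singleton_of_mem (Set.mem_univ (0:F)), Set.ncard_univ,
    Nat.card_eq_fintype_card]

lemma map_inj (b c d : F) :
    Function.Injective
      (fun x : F => (Sum.inr (x, b * x - c, b * c * x * (b + c + b * c) - d) : Vtx F)) := by
  intro x y h
  simpa using congrArg (fun N => Sum.elim (fun p : F × F × F => p.1) (fun l : F × F × F => l.1) N) h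

/-- If the coefficients all vanish, the witness set has `q - 1` elements. -/
lemma ncard_wit_special (β γ b c d : F) (hQ : ¬(c = -β ∧ d = -γ))
    (h2 : co2 β b c = 0) (h1 : co1 β γ b c d = 0) (h0 : co0 β b c = 0) :
    (wit (Sum.inr (0, β, γ)) (Sum.inl (b, c, d)) : Set (Vtx F)).ncard = Fintype.card F - 1 := by
  rw [wit_eq β γ b c d hQ]
  have hs : {x : F | x ≠ 0 ∧ co2 β b c * x ^ 2 + co1 β γ b c d * x + co0 β b c = 0}
      = {x : F | x ≠ 0} := by
    ext x; simp [h2, h1, h0]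
  rw [hs, Set.ncard_image_of_injective _ (map_inj b c d), ncard_ne_zero]

lemma wit_nonempty_special (β γ b c d : F) (hQ : ¬(c = -β ∧ d = -γ))
    (h2 : co2 β b c = 0) (h1 : co1 β γ b c d = 0) (h0 : co0 β b c = 0) :
    (wit (Sum.inr (0, β, γ)) (Sum.inl (b, c, d)) : Set (Vtx F)) ≠ ∅ := by
  rw [wit_eq β γ b c d hQ, ← Set.nonempty_iff_ne_empty]
  exact ⟨_, ⟨1, ⟨one_ne_zero, by rw [h2, h1, h0]; ring⟩, rfl⟩⟩

/-- If `co2 ≠ 0` but `co1 = co0 = 0`, the witness set is empty. -/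
lemma wit_empty (β γ b c d : F) (hQ : ¬(c = -β ∧ d = -γ))
    (h2 : co2 β b c ≠ 0) (h1 : co1 β γ b c d = 0) (h0 : co0 β b c = 0) :
    (wit (Sum.inr (0, β, γ)) (Sum.inl (b, c, d)) : Set (Vtx F)) = ∅ := by
  rw [wit_eq β γ b c d hQ, Set.image_eq_empty]
  ext x
  simp only [Set.mem_setOf_eq, Set.mem_empty_iff_false, iff_false, not_and]
  intro hx hq
  rw [h1, h0] at hq
  have : co2 β b c * x ^ 2 = 0 := by linear_combination hq
  rcases mul_eq_zero.mp this with h | h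
  · exact h2 h
  · exact hx (pow_eq_zero_iff (by norm_num)|>.mp h)

/-- a set of nonzero roots of a nonzero quadratic has at most 2 elements -/
lemma quad_roots_le_two (a b c : F) (h : ¬(a = 0 ∧ b = 0 ∧ c = 0)) :
    ({x : F | x ≠ 0 ∧ a * x ^ 2 + b * x + c = 0}).ncard ≤ 2 := by
  set S := {x : F | x ≠ 0 ∧ a * x ^ 2 + b * x + c = 0} with hS
  rcases Set.eq_empty_or_nonempty S with he | ⟨x₀, hx₀⟩
  · simp [he]
  by_cases h2 : ∃ x₁ ∈ S, x₁ ≠ x₀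
  · obtain ⟨x₁, hx₁, hne⟩ := h2
    have ha : a ≠ 0 := by
      rintro rfl
      have hb : b = 0 := by
        have := sub_eq_zero.mpr (hx₀.2.trans hx₁.2.symm)
        have hb' : b * (x₀ - x₁) = 0 := by linear_combination this
        rcases mul_eq_zero.mp hb' with h' | h'
        · exact h'
        · exact absurd (sub_eq_zero.mp h') (fun hh => hne hh.symm)
      have hc : c = 0 := by
        have := hx₀.2
        rw [hb] at this
        linear_combination this
      exact h ⟨rfl, hb, hc⟩
    have hb : b = -a * (x₀ + x₁) := by
      have hd : a * (x₀ ^ 2 - x₁ ^ 2) + b * (x₀ - x₁) = 0 := by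
        linear_combination hx₀.2 - hx₁.2
      have : (x₀ - x₁) * (a * (x₀ + x₁) + b) = 0 := by linear_combination hd
      rcases mul_eq_zero.mp this with h' | h'
      · exact absurd (sub_eq_zero.mp h') (fun hh => hne hh.symm)
      · linear_combination h'
    have hc : c = a * (x₀ * x₁) := by
      have := hx₀.2
      rw [hb] at this
      linear_combination this
    have hsub : S ⊆ {x₀, x₁} := by
      intro y hy
      have := hy.2
      rw [hb, hc] at this
      have hfac : a * ((y - x₀) * (y - x₁)) = 0 := by linear_combination this
      rcases mul_eq_zero.mp hfac with h' | h'
      · exact absurd h' ha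
      · rcases mul_eq_zero.mp h' with h'' | h''
        · exact Or.inl (sub_eq_zero.mp h'')
        · exact Or.inr (sub_eq_zero.mp h'')
    calc S.ncard ≤ ({x₀, x₁} : Set F).ncard := Set.ncard_le_ncard hsub (Set.toFinite _)
      _ ≤ 2 := by
          rcases eq_or_ne x₀ x₁ with rfl | hne'
          · simp
          · rw [Set.ncard_pair hne']
  · push_neg at h2
    have hsub : S ⊆ {x₀} := fun y hy => h2 y hy
    calc S.ncard ≤ ({x₀} : Set F).ncard := Set.ncard_le_ncard hsub (Set.toFinite _)
      _ ≤ 2 := by simp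

/-- Conversely: witness count `q - 1` forces all coefficients to vanish. -/
lemma special_of_ncard (hq : 4 ≤ Fintype.card F) (β γ b c d : F) (hQ : ¬(c = -β ∧ d = -γ))
    (h : (wit (Sum.inr (0, β, γ)) (Sum.inl (b, c, d)) : Set (Vtx F)).ncard = Fintype.card F - 1) :
    co2 β b c = 0 ∧ co1 β γ b c d = 0 ∧ co0 β b c = 0 := by
  by_contra hcon
  rw [wit_eq β γ b c d hQ, Set.ncard_image_of_injective _ (map_inj b c d)] at h
  have := quad_roots_le_two (co2 β b c) (co1 β γ b c d) (co0 β b c) hcon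
  omega

/-- The witness set of a line w.r.t. a line is empty. -/
lemma wit_line (A l : F × F × F) : (wit (Sum.inr A) (Sum.inr l) : Set (Vtx F)) = ∅ := by
  ext N
  simp only [Set.mem_empty_iff_false, iff_false]
  rintro ⟨hQN, X, hNX, hXA⟩
  rcases N with n | n
  · rcases X with x | x
    · exact adj_pp hNX
    · exact adj_ll hXA
  · exact adj_ll hQN

lemma wit_map (φ : RGraph F ≃g RGraph F) (A Q : Vtx F) : wit (φ A) (φ Q) = φ '' wit A Q := by
  ext N
  constructor
  · rintro ⟨h1, X, h2, h3⟩
    obtain ⟨N', rfl⟩ := φ.surjective N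
    obtain ⟨X', rfl⟩ := φ.surjective X
    exact ⟨N', ⟨φ.map_rel_iff.mp h1, X', φ.map_rel_iff.mp h2, φ.map_rel_iff.mp h3⟩, rfl⟩
  · rintro ⟨N', ⟨h1, X', h2, h3⟩, rfl⟩
    exact ⟨φ.map_rel_iff.mpr h1, φ X', φ.map_rel_iff.mpr h2, φ.map_rel_iff.mpr h3⟩

lemma Phi_map (φ : RGraph F ≃g RGraph F) {A B : Vtx F} (h : Phi A B) : Phi (φ A) (φ B) := by
  obtain ⟨hnc, Q, h1, h2, h3, h4⟩ := h
  refine ⟨?_, φ Q, φ.map_rel_iff.mpr h1, fun hc => h2 (φ.map_rel_iff.mp hc), ?_, ?_⟩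
  · rintro X ⟨ha, hb⟩
    obtain ⟨X', rfl⟩ := φ.surjective X
    exact hnc X' ⟨φ.map_rel_iff.mp ha, φ.map_rel_iff.mp hb⟩
  · rw [wit_map, Set.ncard_image_of_injective _ φ.injective]
    exact h3
  · intro Q' ha hb hne
    obtain ⟨Q'', rfl⟩ := φ.surjective Q'
    have hne' : wit A Q'' ≠ ∅ := by
      rw [wit_map] at hne
      intro hE
      rw [hE] at hne
      simp at hne
    exact congrArg φ (h4 Q'' (φ.map_rel_iff.mp ha) (fun hc => hb (φ.map_rel_iff.mpr hc)) hne')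

/-- `Φ([0,1,γ], [0,0,γ-1])` holds. -/
lemma phi_C1 (γ : F) : Phi (Sum.inr (0, 1, γ)) (Sum.inr (0, 0, γ - 1) : Vtx F) := by
  constructor
  · rintro X ⟨ha, hb⟩
    rcases X with ⟨a, x2, x3⟩ | x
    · have h1 := (adj_lp.mp ha).1
      have h2 := (adj_lp.mp hb).1
      simp only at h1 h2
      exact one_ne_zero (α := F) (by linear_combination h1 - h2)
    · exact adj_ll ha
  · refine ⟨Sum.inl (0, 0, 1 - γ), adj_lp.mpr ⟨by ring, by ring⟩, ?_, ?_, ?_⟩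
    · intro hc
      exact one_ne_zero (α := F) (by linear_combination ((adj_line_point 1 γ 0 0 (1-γ)).mp hc).1)
    · refine ncard_wit_special 1 γ 0 0 (1 - γ) ?_ (by unfold co2; ring) (by unfold co1; ring) (by unfold co0; ring)
      intro hc
      exact one_ne_zero (α := F) (by linear_combination hc.1)
    · intro Q' hBQ' hAQ' hne
      rcases Q' with ⟨b, c, d⟩ | l
      · rcases adj_lp.mp hBQ' with ⟨h1, h2⟩
        simp only at h1 h2
        have hc : c = 0 := by linear_combination h1
        have hd : d = 1 - γ := by linear_combination h2
        subst hc hd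
        rcases eq_or_ne b 0 with rfl | hb
        · rfl
        · exfalso
          apply hne
          refine wit_empty 1 γ b 0 (1 - γ) ?_ ?_ (by unfold co1; ring) (by unfold co0; ring)
          · intro hcon
            exact one_ne_zero (α := F) (by linear_combination hcon.1)
          · simp only [co2]
            intro hcon
            rcases mul_eq_zero.mp hcon with h' | h'
            · exact hb h'
            · exact one_ne_zero (α := F) (by linear_combination -h')
      · exact (adj_ll hBQ').elim

/-- `Φ([0,0,γ], [0,1,γ])` holds. -/
lemma phi_C2 (γ : F) : Phi (Sum.inr (0, 0, γ)) (Sum.inr (0, 1, γ) : Vtx F) := by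
  constructor
  · rintro X ⟨ha, hb⟩
    rcases X with ⟨a, x2, x3⟩ | x
    · have h1 := (adj_lp.mp ha).1
      have h2 := (adj_lp.mp hb).1
      simp only at h1 h2
      exact one_ne_zero (α := F) (by linear_combination h2 - h1)
    · exact adj_ll ha
  · refine ⟨Sum.inl (0, -1, -γ), adj_lp.mpr ⟨by ring, by ring⟩, ?_, ?_, ?_⟩
    · intro hc
      exact one_ne_zero (α := F) (by linear_combination -((adj_line_point 0 γ 0 (-1) (-γ)).mp hc).1)
    · refine ncard_wit_special 0 γ 0 (-1) (-γ) ?_ (by unfold co2; ring) (by unfold co1; ring) (by unfold co0; ring)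
      intro hc
      exact one_ne_zero (α := F) (by linear_combination -hc.1)
    · intro Q' hBQ' hAQ' hne
      rcases Q' with ⟨b, c, d⟩ | l
      · rcases adj_lp.mp hBQ' with ⟨h1, h2⟩
        simp only at h1 h2
        have hc : c = -1 := by linear_combination h1
        have hd : d = -γ := by linear_combination h2
        subst hc hd
        rcases eq_or_ne b 0 with rfl | hb
        · rfl
        · exfalso
          apply hne
          refine wit_empty 0 γ b (-1) (-γ) ?_ ?_ (by unfold co1; ring) (by unfold co0; ring)
          · intro hcon
            exact one_ne_zero (α := F) (by linear_combination -hcon.1)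
          · simp only [co2]
            intro hcon
            rcases mul_eq_zero.mp hcon with h' | h'
            · exact hb h'
            · exact one_ne_zero (α := F) (by linear_combination h')
      · exact (adj_ll hBQ').elim

/-- No vertex is in the `Phi`-relation with a line of the form `[0,-1,γ]`. -/
lemma phi_N3 (hq : 4 ≤ Fintype.card F) (h2F : (2 : F) ≠ 0) (γ : F) (B : Vtx F) :
    ¬ Phi (Sum.inr (0, -1, γ)) B := by
  rintro ⟨hnc, Q, hBQ, hAQ, hcard, huniq⟩
  rcases Q with ⟨b, c, d⟩ | l
  · have hQne : ¬(c = -(-1) ∧ d = -γ) := fun hc => hAQ ((adj_line_point (-1) γ b c d).mpr hc)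
    obtain ⟨hco2, hco1, hco0⟩ := special_of_ncard hq (-1) γ b c d hQne hcard
    have hc1 : c = 1 := by
      simp only [co0] at hco0
      have h4 : (c + -1) ^ 2 = 0 := by
        rcases mul_eq_zero.mp hco0 with h' | h'
        · exfalso
          apply h2F
          linear_combination -h'
        · exact h'
      have := pow_eq_zero_iff (n := 2) (by norm_num) |>.mp h4
      linear_combination this
    have hd : d = -γ := by
      simp only [co1, hc1] at hco1
      linear_combination -hco1
    exact hQne ⟨by rw [hc1]; ring, hd⟩
  · rw [wit_line, Set.ncard_empty] at hcard
    omega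

/-- Characterization: if `Φ([0,1,γ], B)` then `B = [0,0,γ-1]` or `B = [0,-1,γ-2]`. -/
lemma phi_N1 (hq : 4 ≤ Fintype.card F) (γ : F) (B : Vtx F)
    (h : Phi (Sum.inr (0, 1, γ)) B) :
    B = Sum.inr (0, 0, γ - 1) ∨ B = Sum.inr (0, -1, γ - 2) := by
  obtain ⟨hnc, Q, hBQ, hAQ, hcard, huniq⟩ := h
  rcases Q with ⟨b, c, d⟩ | l
  swap
  · rw [wit_line, Set.ncard_empty] at hcard
    omega
  rcases B with p | ⟨m1, m2, m3⟩
  · exact (adj_pp hBQ).elim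
  have hQne : ¬(c = -1 ∧ d = -γ) := fun hc => hAQ ((adj_line_point 1 γ b c d).mpr hc)
  obtain ⟨hco2, hco1, hco0⟩ := special_of_ncard hq 1 γ b c d hQne hcard
  rcases adj_lp.mp hBQ with ⟨h1, h2⟩
  simp only at h1 h2
  have hd : d = c + 1 - γ := by
    simp only [co1] at hco1
    linear_combination -hco1
  -- m3 = γ + m2 - 1
  have hm3 : m3 = γ + m2 - 1 := by
    simp only [co2] at hco2
    rcases mul_eq_zero.mp hco2 with hb0 | hcb
    · subst hb0
      have hc : c = -m2 := by linear_combination h1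
      have hd2 : d = -m3 := by linear_combination h2
      rw [hc] at hd
      linear_combination hd2 - hd
    · have hcb' : c * (b + c + b * c) = 1 := by linear_combination hcb
      linear_combination h2 - h1 + b * m1 * hcb' - hd
  -- m1 = 0
  have hm1 : m1 = 0 := by
    by_contra hm1
    refine hnc (Sum.inl ((m2 - 1) / m1, -1, -γ)) ⟨adj_lp.mpr ⟨by ring, by ring⟩,
      adj_lp.mpr ⟨?_, ?_⟩⟩
    · simp only
      field_simp
      try ring
    · simp only
      rw [hm3]
      field_simp
      try ring
  subst hm1
  have hc : c = -m2 := by linear_combination h1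
  have hd2 : d = -m3 := by linear_combination h2
  -- m2 ≠ 1
  have hm2ne1 : m2 ≠ 1 := by
    rintro rfl
    refine hnc (Sum.inl (0, -1, -γ)) ⟨adj_lp.mpr ⟨by ring, by ring⟩, adj_lp.mpr ⟨by ring, ?_⟩⟩
    simp only
    rw [hm3]
    ring
  rcases eq_or_ne m2 0 with rfl | hm2ne0
  · left
    simp only [Sum.inr.injEq, Prod.mk.injEq]
    exact ⟨trivial, trivial, by rw [hm3]; ring⟩
  rcases eq_or_ne m2 (-1) with rfl | hm2neneg
  · right
    simp only [Sum.inr.injEq, Prod.mk.injEq]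
    exact ⟨trivial, trivial, by rw [hm3]; ring⟩
  exfalso
  -- two distinct special neighbours
  have hAQ0 : ¬ (RGraph F).Adj (Sum.inr (0, 1, γ)) (Sum.inl (0, -m2, -m3)) := by
    intro hc'
    rcases (adj_line_point 1 γ 0 (-m2) (-m3)).mp hc' with ⟨hx, _⟩
    exact hm2ne1 (by linear_combination -hx)
  have hAQb : ¬ (RGraph F).Adj (Sum.inr (0, 1, γ)) (Sum.inl (-(1 + m2) / m2, -m2, -m3)) := by
    intro hc'
    rcases (adj_line_point 1 γ (-(1 + m2) / m2) (-m2) (-m3)).mp hc' with ⟨hx, _⟩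
    exact hm2ne1 (by linear_combination -hx)
  have hQ0 : (Sum.inl (0, -m2, -m3) : Vtx F) = Sum.inl (b, c, d) := by
    refine huniq _ (adj_lp.mpr ⟨by ring, by ring⟩) hAQ0 ?_
    refine wit_nonempty_special 1 γ 0 (-m2) (-m3)
      (fun hc' => hAQ0 ((adj_line_point 1 γ 0 (-m2) (-m3)).mpr hc'))
      (by unfold co2; ring) ?_ (by unfold co0; ring)
    unfold co1
    linear_combination hm3
  have hQb : (Sum.inl (-(1 + m2) / m2, -m2, -m3) : Vtx F) = Sum.inl (b, c, d) := by
    refine huniq _ (adj_lp.mpr ⟨by ring, by ring⟩) hAQb ?_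
    refine wit_nonempty_special 1 γ (-(1 + m2) / m2) (-m2) (-m3)
      (fun hc' => hAQb ((adj_line_point 1 γ (-(1 + m2) / m2) (-m2) (-m3)).mpr hc'))
      ?_ ?_ (by unfold co0; ring)
    · unfold co2
      have : (-m2) * (-(1 + m2) / m2 + -m2 + -(1 + m2) / m2 * -m2) - 1 ^ 2 + 1 * (1 - 1) * (-(1 + m2) / m2) = 0 := by
        field_simp
        ring
      rw [this]
      ring
    · unfold co1
      linear_combination hm3
  have := hQ0.trans hQb.symm
  simp only [Sum.inl.injEq, Prod.mk.injEq] at this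
  have h0 : -(1 + m2) / m2 = (0 : F) := this.1.symm
  rw [div_eq_iff hm2ne0] at h0
  exact hm2neneg (by linear_combination -h0)

end AutShiftAux

/-- Let `q` be a power of an odd prime with `q ≡ 1 (mod 3)` and `F = 𝔽_q`, and let `φ` be an
automorphism of `R`. If `φ([0,1,r]) = [0,1,w]`, then `φ([0,0,r−1]) = [0,0,w−1]`. -/
theorem aut_shift (q p e : ℕ) (hp : p.Prime) (hodd : Odd p) (he : 1 ≤ e)
    (hq : q = p ^ e) (hmod : q % 3 = 1) (F : Type) [Field F] [Fintype F]
    (hcard : Fintype.card F = q) (φ : RGraph F ≃g RGraph F) (r w : F)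
    (h : φ (Sum.inr (0, 1, r)) = Sum.inr (0, 1, w)) :
    φ (Sum.inr (0, 0, r - 1)) = Sum.inr (0, 0, w - 1) := by
  have hq2 : 2 ≤ q := by
    rw [hq]
    calc 2 ≤ p := hp.two_le
    _ ≤ p ^ e := Nat.le_self_pow (by omega) p
  have hqodd : q % 2 = 1 := by
    rw [hq]
    exact Nat.odd_iff.mp (hodd.pow)
  have h7 : 7 ≤ q := by omega
  have hq4 : 4 ≤ Fintype.card F := by rw [hcard]; omega
  have h2F : (2 : F) ≠ 0 := by
    intro h2
    have hc0 : ((q : ℕ) : F) = 0 := by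
      rw [← hcard]
      exact FiniteField.cast_card_eq_zero F
    obtain ⟨k, hk⟩ := Nat.odd_iff.mpr hqodd
    rw [hk] at hc0
    push_cast at hc0
    exact one_ne_zero (α := F) (by linear_combination hc0 - (k : F) * h2)
  have hP1 := AutShiftAux.phi_C1 (F := F) r
  have hP2 := AutShiftAux.phi_C2 (F := F) (r - 1)
  have hT1 := AutShiftAux.Phi_map φ hP1
  rw [h] at hT1
  rcases AutShiftAux.phi_N1 hq4 w _ hT1 with hB | hB
  · exact hB
  · exfalso
    have hT2 := AutShiftAux.Phi_map φ hP2
    rw [hB] at hT2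
    exact AutShiftAux.phi_N3 hq4 h2F (w - 2) _ hT2
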